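/- The map from the space of monic complex polynomials of degree n (identified with ℂⁿ via their non-leading coefficients) to the space of multisets of n complex numbers (with the natural metric: the minimum over bijections of the maximum pairwise distance) sending a polynomial to its multiset of roots is continuous. -/

import Mathlib

open Polynomial Finset

noncomputable def Complex.abs : AbsoluteValue ℂ ℝ := NormedField.toAbsoluteValue ℂ

noncomputable def gdiv (f : Polynomial ℂ) (t : ℂ) : Polynomial ℂ :=
  ∑ i ∈ Finset.range (f.natDegree + 1),
    C (f.coeff i) * ∑ j ∈ Finset.range i, X ^ j * C t ^ (i - 1 - j)

lemma gdiv_mul (f : Polynomial ℂ) (t : ℂ) :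
    (X - C t) * gdiv f t = f - C (f.eval t) := by
  have h : ∀ i : ℕ, (X - C t) * (C (f.coeff i) * ∑ j ∈ Finset.range i, X ^ j * C t ^ (i - 1 - j))
      = C (f.coeff i) * (X ^ i - C t ^ i) := by
    intro i
    have := geom_sum₂_mul (X : Polynomial ℂ) (C t) i
    ring_nf
    ring_nf at this
    linear_combination C (f.coeff i) * this
  rw [gdiv, Finset.mul_sum]
  simp only [h]
  have hf : f = ∑ i ∈ Finset.range (f.natDegree + 1), C (f.coeff i) * X ^ i := by
    conv_lhs => rw [f.as_sum_range' (f.natDegree + 1) (Nat.lt_succ_self _)]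
    simp [C_mul_X_pow_eq_monomial]
  have he : C (f.eval t) = ∑ i ∈ Finset.range (f.natDegree + 1), C (f.coeff i) * C t ^ i := by
    rw [eval_eq_sum_range]
    simp [mul_comm]
  have h2 : ∀ i:ℕ, C (f.coeff i) * (X ^ i - C t ^ i) = C (f.coeff i) * X ^ i - C (f.coeff i) * C t ^ i := fun i => by ring
  simp only [h2]
  rw [Finset.sum_sub_distrib, ← hf, ← he]

lemma gdiv_coeff (f : Polynomial ℂ) (t : ℂ) (m : ℕ) :
    (gdiv f t).coeff m = ∑ i ∈ Finset.range (f.natDegree + 1),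
      f.coeff i * (if m < i then t ^ (i - 1 - m) else 0) := by
  rw [gdiv, finset_sum_coeff]
  apply Finset.sum_congr rfl
  intro i _
  rw [coeff_C_mul, finset_sum_coeff]
  congr 1
  have : ∀ j ∈ Finset.range i, (X ^ j * C t ^ (i-1-j) : Polynomial ℂ).coeff m
      = if j = m then t ^ (i - 1 - j) else 0 := by
    intro j _
    rw [← C_pow, mul_comm, coeff_C_mul, coeff_X_pow]
    split <;> simp_all [eq_comm]
  rw [Finset.sum_congr rfl this, Finset.sum_ite_eq' (Finset.range i) m]
  simp [Finset.mem_range]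

lemma gdiv_eq (f : Polynomial ℂ) (t : ℂ) (ht : f.eval t = 0) :
    f = (X - C t) * gdiv f t := by rw [gdiv_mul, ht, map_zero, sub_zero]

lemma gdiv_monic {f : Polynomial ℂ} {t : ℂ} {N : ℕ} (hf : f.Monic) (hd : f.natDegree = N + 1)
    (ht : f.eval t = 0) : (gdiv f t).Monic ∧ (gdiv f t).natDegree = N := by
  have heq := gdiv_eq f t ht
  have hg0 : gdiv f t ≠ 0 := by
    intro h; rw [h, mul_zero] at heq; exact hf.ne_zero heq
  have hX : (X - C t : Polynomial ℂ) ≠ 0 := (monic_X_sub_C t).ne_zero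
  have hnd : f.natDegree = 1 + (gdiv f t).natDegree := by
    have h := natDegree_mul hX hg0
    rw [← heq, natDegree_X_sub_C] at h
    exact h
  have hdeg : (gdiv f t).natDegree = N := by omega
  refine ⟨?_, hdeg⟩
  have h := leadingCoeff_mul (X - C t) (gdiv f t)
  rw [← heq, hf.leadingCoeff, (monic_X_sub_C t).leadingCoeff, one_mul] at h
  exact (Monic.def).2 h.symm

lemma gdiv_roots {f : Polynomial ℂ} {t : ℂ} (hf : f ≠ 0) (ht : f.eval t = 0) :
    f.roots = t ::ₘ (gdiv f t).roots := by
  have heq := gdiv_eq f t ht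
  have := roots_mul (heq ▸ hf)
  rw [← heq, roots_X_sub_C] at this
  rw [this]; rfl

lemma multiset_pow_le_prod (m : Multiset ℝ) (e : ℝ) (he : 0 ≤ e)
    (h : ∀ x ∈ m, e ≤ x) : e ^ (Multiset.card m) ≤ m.prod := by
  induction m using Multiset.induction with
  | empty => simp
  | cons a t ih =>
    rw [Multiset.prod_cons, Multiset.card_cons, pow_succ, mul_comm]
    have ha : e ≤ a := h a (Multiset.mem_cons_self a t)
    have ht : e ^ Multiset.card t ≤ t.prod := ih (fun x hx => h x (Multiset.mem_cons_of_mem hx))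
    have : (0:ℝ) ≤ e ^ Multiset.card t := pow_nonneg he _
    nlinarith

lemma roots_card' {p : Polynomial ℂ} (hp : p ≠ 0) : Multiset.card p.roots = p.natDegree :=
  splits_iff_card_roots.mp (IsAlgClosed.splits p)

lemma eval_abs_eq_prod {p : Polynomial ℂ} (hp : p.Monic) (s : ℂ) :
    Complex.abs (p.eval s) = (p.roots.map (fun r => Complex.abs (s - r))).prod := by
  conv_lhs => rw [(IsAlgClosed.splits p).eq_prod_roots_of_monic hp]
  rw [eval_multiset_prod, map_multiset_prod (Complex.abs)]
  simp [Multiset.map_map, Function.comp]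

lemma exists_close_root {p : Polynomial ℂ} {N : ℕ} (hp : p.Monic) (hd : p.natDegree = N + 1)
    (s : ℂ) (e : ℝ) (he : 0 < e) (hev : Complex.abs (p.eval s) < e ^ (N + 1)) :
    ∃ r ∈ p.roots, Complex.abs (s - r) < e := by
  by_contra hc
  push_neg at hc
  have h1 : e ^ (N+1) ≤ Complex.abs (p.eval s) := by
    rw [eval_abs_eq_prod hp]
    have hcard : Multiset.card (p.roots.map (fun r => Complex.abs (s - r))) = N + 1 := by
      rw [Multiset.card_map, roots_card' hp.ne_zero, hd]
    rw [← hcard]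
    apply multiset_pow_le_prod _ _ he.le
    intro x hx
    obtain ⟨r, hr, rfl⟩ := Multiset.mem_map.mp hx
    exact hc r hr
  linarith

lemma root_bound {q : Polynomial ℂ} {N : ℕ} (hq : q.Monic) (hd : q.natDegree = N + 1)
    {s : ℂ} (hs : q.eval s = 0) :
    Complex.abs s ≤ max 1 (∑ i ∈ Finset.range (N + 1), Complex.abs (q.coeff i)) := by
  rcases le_or_gt (Complex.abs s) 1 with h | h
  · exact le_max_of_le_left h
  apply le_max_of_le_right
  have h0 : (0:ℝ) < Complex.abs s := by linarith
  have hev : (0:ℂ) = ∑ i ∈ Finset.range (N + 2), q.coeff i * s ^ i := by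
    rw [← hs, eval_eq_sum_range, hd]
  rw [Finset.sum_range_succ] at hev
  have htop : q.coeff (N+1) = 1 := by
    have := hq.leadingCoeff; rwa [leadingCoeff, hd] at this
  rw [htop, one_mul] at hev
  have h1 : s ^ (N+1) = -∑ i ∈ Finset.range (N + 1), q.coeff i * s ^ i := by
    linear_combination -hev
  have h2 : Complex.abs s ^ (N+1) ≤ (∑ i ∈ Finset.range (N + 1), Complex.abs (q.coeff i)) * Complex.abs s ^ N := by
    calc Complex.abs s ^ (N+1) = Complex.abs (s ^ (N+1)) := by rw [map_pow]
    _ = Complex.abs (∑ i ∈ Finset.range (N + 1), q.coeff i * s ^ i) := by rw [h1, Complex.abs.map_neg]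
    _ ≤ ∑ i ∈ Finset.range (N + 1), Complex.abs (q.coeff i * s ^ i) := by
        exact Complex.abs.sum_le _ _
    _ ≤ ∑ i ∈ Finset.range (N + 1), Complex.abs (q.coeff i) * Complex.abs s ^ N := by
        apply Finset.sum_le_sum
        intro i hi
        rw [map_mul, map_pow]
        apply mul_le_mul_of_nonneg_left _ (AbsoluteValue.nonneg _ _)
        exact pow_le_pow_right₀ (by linarith) (Nat.lt_succ_iff.mp (Finset.mem_range.mp hi))
    _ = _ := by rw [← Finset.sum_mul]
  have h3 : Complex.abs s ^ (N+1) = Complex.abs s * Complex.abs s ^ N := by ring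
  rw [h3] at h2
  exact le_of_mul_le_mul_right h2 (pow_pos h0 N)

lemma eval_diff_bound {p q : Polynomial ℂ} {N : ℕ} (hp : p.Monic) (hq : q.Monic)
    (hdp : p.natDegree = N + 1) (hdq : q.natDegree = N + 1) (s : ℂ) :
    Complex.abs (p.eval s - q.eval s)
      ≤ ∑ i ∈ Finset.range (N + 1), Complex.abs (p.coeff i - q.coeff i) * Complex.abs s ^ i := by
  have hps : p.eval s = ∑ i ∈ Finset.range (N + 2), p.coeff i * s ^ i := by
    rw [eval_eq_sum_range, hdp]
  have hqs : q.eval s = ∑ i ∈ Finset.range (N + 2), q.coeff i * s ^ i := by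
    rw [eval_eq_sum_range, hdq]
  have htp : p.coeff (N+1) = 1 := by have := hp.leadingCoeff; rwa [leadingCoeff, hdp] at this
  have htq : q.coeff (N+1) = 1 := by have := hq.leadingCoeff; rwa [leadingCoeff, hdq] at this
  have key : p.eval s - q.eval s = ∑ i ∈ Finset.range (N + 1), (p.coeff i - q.coeff i) * s ^ i := by
    rw [Finset.sum_range_succ, htp] at hps
    rw [Finset.sum_range_succ, htq] at hqs
    rw [hps, hqs, show (∑ i ∈ Finset.range (N+1), (p.coeff i - q.coeff i) * s ^ i)
        = (∑ i ∈ Finset.range (N+1), p.coeff i * s^i) - ∑ i ∈ Finset.range (N+1), q.coeff i * s^i from by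
      rw [← Finset.sum_sub_distrib]; exact Finset.sum_congr rfl (fun i _ => by ring)]
    ring
  rw [key]
  calc Complex.abs (∑ i ∈ Finset.range (N + 1), (p.coeff i - q.coeff i) * s ^ i)
      ≤ ∑ i ∈ Finset.range (N + 1), Complex.abs ((p.coeff i - q.coeff i) * s ^ i) :=
        Complex.abs.sum_le _ _
    _ = _ := by simp [map_mul, map_pow]

noncomputable def qc (N : ℕ) (m : ℕ) : ℂ × (Fin (N+1) → ℂ) → ℂ := fun x =>
  ∑ i : Fin (N+1), x.2 i * (if m < (i:ℕ) then x.1 ^ ((i:ℕ) - 1 - m) else 0)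

lemma qc_continuous (N m : ℕ) : Continuous (qc N m) := by
  apply continuous_finset_sum
  intro i _
  apply Continuous.mul
  · exact (continuous_apply i).comp continuous_snd
  · by_cases h : m < (i:ℕ)
    · simp only [if_pos h]; exact continuous_fst.pow _
    · simp only [if_neg h]; exact continuous_const

lemma gdiv_coeff_qc {f : Polynomial ℂ} {N : ℕ} (hfd : f.natDegree = N) (t : ℂ) (m : ℕ) :
    (gdiv f t).coeff m = qc N m (t, fun i : Fin (N+1) => f.coeff i) := by
  rw [gdiv_coeff, hfd, qc, ← Fin.sum_univ_eq_sum_range]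

def Stmt (n : ℕ) : Prop := ∀ p : Polynomial ℂ, p.Monic → p.natDegree = n →
    ∀ ε > (0 : ℝ), ∃ δ > (0 : ℝ), ∀ q : Polynomial ℂ, q.Monic → q.natDegree = n →
      (∀ i < n, Complex.abs (p.coeff i - q.coeff i) < δ) →
      ∃ (r s : Fin n → ℂ),
        p.roots = (List.ofFn r : Multiset ℂ) ∧
        q.roots = (List.ofFn s : Multiset ℂ) ∧
        ∀ i, Complex.abs (r i - s i) < ε

lemma stmt_zero : Stmt 0 := by
  intro p hp hpn ε hε
  refine ⟨1, one_pos, ?_⟩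
  intro q hq hqn _
  refine ⟨fun i => i.elim0, fun i => i.elim0, ?_, ?_, fun i => i.elim0⟩
  · rw [hp.natDegree_eq_zero.mp hpn]; simp
  · rw [hq.natDegree_eq_zero.mp hqn]; simp

lemma stmt_succ (n : ℕ) (ih : Stmt n) : Stmt (n + 1) := by
  intro p hp hpn ε hε
  have hp0 := hp.ne_zero
  have hcard : Multiset.card p.roots = n + 1 := by rw [roots_card' hp0, hpn]
  -- per-root property
  have key : ∀ r ∈ p.roots, ∃ γ > (0:ℝ), ∀ (q : Polynomial ℂ) (s : ℂ), q.Monic →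
      q.natDegree = n + 1 → q.eval s = 0 → Complex.abs (s - r) < γ →
      (∀ i < n + 1, Complex.abs (p.coeff i - q.coeff i) < γ) →
      ∃ r' s' : Fin n → ℂ, (gdiv p r).roots = (List.ofFn r' : Multiset ℂ) ∧
        (gdiv q s).roots = (List.ofFn s' : Multiset ℂ) ∧
        ∀ i, Complex.abs (r' i - s' i) < ε := by
    intro r hr
    have hr0 : p.eval r = 0 := (mem_roots hp0).mp hr
    obtain ⟨hgm, hgd⟩ := gdiv_monic hp hpn hr0
    obtain ⟨δ₁, hδ₁pos, hδ₁⟩ := ih (gdiv p r) hgm hgd ε hε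
    have hF : Continuous (fun x : ℂ × (Fin (n+2) → ℂ) => fun m : Fin n => qc (n+1) (m:ℕ) x) :=
      continuous_pi (fun m => qc_continuous (n+1) (m:ℕ))
    have hcont := hF.continuousAt (x := (r, fun i : Fin (n+2) => p.coeff (i:ℕ)))
    rw [Metric.continuousAt_iff] at hcont
    obtain ⟨γ, hγpos, hγ⟩ := hcont δ₁ hδ₁pos
    refine ⟨γ, hγpos, ?_⟩
    intro q s hq hqd hqs hsr hco
    have htp : p.coeff (n+1) = 1 := by have := hp.leadingCoeff; rwa [leadingCoeff, hpn] at this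
    have htq : q.coeff (n+1) = 1 := by have := hq.leadingCoeff; rwa [leadingCoeff, hqd] at this
    have hin : dist ((s, fun i : Fin (n+2) => q.coeff (i:ℕ)))
        ((r, fun i : Fin (n+2) => p.coeff (i:ℕ))) < γ := by
      rw [Prod.dist_eq]
      apply max_lt
      · rw [Complex.dist_eq]; exact hsr
      · rw [dist_pi_lt_iff hγpos]
        intro i
        rcases lt_or_eq_of_le (Nat.lt_succ_iff.mp i.2) with h | h
        · rw [Complex.dist_eq]; change Complex.abs _ < γ; rw [← Complex.abs.map_neg]
          have := hco (i:ℕ) h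
          simpa [neg_sub] using this
        · rw [Complex.dist_eq]
          show Complex.abs (q.coeff ↑i - p.coeff ↑i) < γ
          rw [h, htp, htq, sub_self, map_zero]; exact hγpos
    have hout := hγ hin
    rw [dist_pi_lt_iff hδ₁pos] at hout
    obtain ⟨hgqm, hgqd⟩ := gdiv_monic hq hqd hqs
    apply hδ₁ (gdiv q s) hgqm hgqd
    intro m hm
    have := hout ⟨m, hm⟩
    rw [Complex.dist_eq] at this; change Complex.abs _ < δ₁ at this
    rw [gdiv_coeff_qc hpn r m, gdiv_coeff_qc hqd s m]
    rw [← Complex.abs.map_neg]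
    simpa [neg_sub] using this
  choose! γ hγpos hγ using key
  -- roots toFinset nonempty
  have hrne : p.roots ≠ 0 := by
    intro h; rw [h] at hcard; simp at hcard
  have hne : p.roots.toFinset.Nonempty := by
    obtain ⟨r, hr⟩ := Multiset.exists_mem_of_ne_zero hrne
    exact ⟨r, Multiset.mem_toFinset.mpr hr⟩
  set ε' : ℝ := min ε (p.roots.toFinset.inf' hne γ) with hε'def
  have hε'pos : 0 < ε' := by
    apply lt_min hε
    rw [Finset.lt_inf'_iff]
    intro r hr
    exact hγpos r (Multiset.mem_toFinset.mp hr)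
  set B : ℝ := max 1 (∑ i ∈ Finset.range (n + 1), (Complex.abs (p.coeff i) + 1)) with hBdef
  have hB1 : (1:ℝ) ≤ B := le_max_left _ _
  set K : ℝ := (n + 1) * B ^ (n + 1) with hKdef
  have hKpos : (0:ℝ) < K := by positivity
  set δ : ℝ := min (min 1 ε') (ε' ^ (n + 1) / (2 * K)) with hδdef
  have hδpos : 0 < δ := by
    apply lt_min (lt_min one_pos hε'pos)
    positivity
  refine ⟨δ, hδpos, ?_⟩
  intro q hq hqd hco
  have hq0 := hq.ne_zero
  -- q has a root
  obtain ⟨s, hs⟩ : ∃ s, q.eval s = 0 := by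
    obtain ⟨z, hz⟩ := Complex.exists_root (f := q) (by
      rw [← natDegree_pos_iff_degree_pos, hqd]; omega)
    exact ⟨z, hz⟩
  -- bound |s|
  have hsB : Complex.abs s ≤ B := by
    refine le_trans (root_bound hq hqd hs) (max_le_max le_rfl ?_)
    apply Finset.sum_le_sum
    intro i hi
    have hi' : i < n + 1 := Finset.mem_range.mp hi
    have h1 := hco i hi'
    have h2 : δ ≤ 1 := le_trans (min_le_left _ _) (min_le_left _ _)
    have h3 : Complex.abs (q.coeff i) ≤ Complex.abs (p.coeff i) + Complex.abs (p.coeff i - q.coeff i) := by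
      calc Complex.abs (q.coeff i) = Complex.abs (p.coeff i + -(p.coeff i - q.coeff i)) := by
            congr 1; ring
        _ ≤ Complex.abs (p.coeff i) + Complex.abs (-(p.coeff i - q.coeff i)) :=
            Complex.abs.add_le _ _
        _ = _ := by rw [Complex.abs.map_neg]
    linarith
  -- eval bound
  have heval : Complex.abs (p.eval s) < ε' ^ (n + 1) := by
    have h1 : p.eval s = p.eval s - q.eval s := by rw [hs, sub_zero]
    rw [h1]
    have h2 := eval_diff_bound hp hq hpn hqd s
    have h3 : ∑ i ∈ Finset.range (n + 1), Complex.abs (p.coeff i - q.coeff i) * Complex.abs s ^ i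
        ≤ ∑ i ∈ Finset.range (n + 1), δ * B ^ (n + 1) := by
      apply Finset.sum_le_sum
      intro i hi
      have hi' : i < n + 1 := Finset.mem_range.mp hi
      have ha := hco i hi'
      have hb : Complex.abs s ^ i ≤ B ^ (n + 1) := by
        calc Complex.abs s ^ i ≤ B ^ i :=
              pow_le_pow_left₀ (AbsoluteValue.nonneg _ _) hsB i
          _ ≤ B ^ (n+1) := pow_le_pow_right₀ hB1 (by omega)
      have hc0 : (0:ℝ) ≤ Complex.abs s ^ i := by positivity
      nlinarith [AbsoluteValue.nonneg Complex.abs (p.coeff i - q.coeff i)]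
    have h4 : (∑ _i ∈ Finset.range (n + 1), δ * B ^ (n + 1)) = δ * K := by
      rw [Finset.sum_const, Finset.card_range, hKdef]
      push_cast
      ring
    have h5 : δ * K ≤ ε' ^ (n + 1) / (2 * K) * K :=
      mul_le_mul_of_nonneg_right (le_trans (min_le_right _ _) le_rfl) hKpos.le
    have h6 : ε' ^ (n + 1) / (2 * K) * K < ε' ^ (n + 1) := by
      rw [div_mul_eq_mul_div, mul_comm]
      rw [div_lt_iff₀ (by positivity)]
      have : (0:ℝ) < ε' ^ (n+1) := by positivity
      nlinarith
    calc Complex.abs (p.eval s - q.eval s) ≤ _ := h2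
      _ ≤ ∑ _i ∈ Finset.range (n + 1), δ * B ^ (n + 1) := h3
      _ = δ * K := h4
      _ ≤ _ := h5
      _ < _ := h6
  -- find close root of p
  obtain ⟨r, hr, hsr⟩ := exists_close_root hp hpn s ε' hε'pos heval
  have hrF : r ∈ p.roots.toFinset := Multiset.mem_toFinset.mpr hr
  have hε'γ : ε' ≤ γ r := le_trans (min_le_right _ _) (Finset.inf'_le _ hrF)
  have hε'ε : ε' ≤ ε := min_le_left _ _
  have hδε' : δ ≤ ε' := le_trans (min_le_left _ _) (min_le_right _ _)
  have hr0 : p.eval r = 0 := (mem_roots hp0).mp hr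
  obtain ⟨r', s', hpr, hqr, hclose⟩ := hγ r hr q s hq hqd hs
    (lt_of_lt_of_le hsr hε'γ)
    (fun i hi => lt_of_lt_of_le (hco i hi) (le_trans hδε' hε'γ))
  refine ⟨Fin.cons r r', Fin.cons s s', ?_, ?_, ?_⟩
  · rw [gdiv_roots hp0 hr0, hpr, List.ofFn_succ]
    simp [Fin.cons_zero, Fin.cons_succ]
  · rw [gdiv_roots hq0 hs, hqr, List.ofFn_succ]
    simp [Fin.cons_zero, Fin.cons_succ]
  · intro i
    refine Fin.cases ?_ ?_ i
    · simp only [Fin.cons_zero]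
      rw [← Complex.abs.map_neg]
      simpa [neg_sub] using lt_of_lt_of_le hsr hε'ε
    · intro j
      simp only [Fin.cons_succ]
      exact hclose j

lemma stmt_all : ∀ n, Stmt n := by
  intro n
  induction n with
  | zero => exact stmt_zero
  | succ n ih => exact stmt_succ n ih

theorem monic_roots_continuous
    (n : ℕ) (p : Polynomial ℂ) (hp : p.Monic) (hpn : p.natDegree = n) :
    ∀ ε > (0 : ℝ), ∃ δ > (0 : ℝ), ∀ q : Polynomial ℂ, q.Monic → q.natDegree = n →
      (∀ i < n, ‖p.coeff i - q.coeff i‖ < δ) →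
      ∃ (r s : Fin n → ℂ),
        p.roots = (List.ofFn r : Multiset ℂ) ∧
        q.roots = (List.ofFn s : Multiset ℂ) ∧
        ∀ i, ‖r i - s i‖ < ε := by
  exact stmt_all n p hp hpn
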